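/- Let X be an object of an abelian category that satisfies both the ascending chain condition and the descending chain condition on its subobjects (equivalently, X has finite length). Then X satisfies the bi-chain condition. -/

import Mathlib

open CategoryTheory CategoryTheory.Limits

universe v u

/-- An object `X` satisfies the *bi-chain condition* if for every bi-chain
`X_n ⟶ X_{n+1} ⟶ X_n` (with the `α n` epimorphisms and the `β n` monomorphisms)
starting at `X₀ = X`, all `α n` and `β n` are isomorphisms for large enough `n`. -/
def BichainCondition {A : Type u} [Category.{v} A] (X : A) : Prop :=
  ∀ (obj : ℕ → A) (α : ∀ n, obj n ⟶ obj (n + 1)) (β : ∀ n, obj (n + 1) ⟶ obj n),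
    obj 0 = X → (∀ n, Epi (α n)) → (∀ n, Mono (β n)) →
    ∃ n₀ : ℕ, ∀ n, n₀ ≤ n → IsIso (α n) ∧ IsIso (β n)

/-- Composite `obj 0 ⟶ obj n` of the epimorphisms of a bi-chain. -/
def bichainCompα {A : Type u} [Category.{v} A] (obj : ℕ → A)
    (α : ∀ n, obj n ⟶ obj (n + 1)) : ∀ n, obj 0 ⟶ obj n
  | 0 => 𝟙 _
  | n + 1 => bichainCompα obj α n ≫ α n

/-- Composite `obj n ⟶ obj 0` of the monomorphisms of a bi-chain. -/
def bichainCompβ {A : Type u} [Category.{v} A] (obj : ℕ → A)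
    (β : ∀ n, obj (n + 1) ⟶ obj n) : ∀ n, obj n ⟶ obj 0
  | 0 => 𝟙 _
  | n + 1 => β n ≫ bichainCompβ obj β n

lemma bichainCompα_epi {A : Type u} [Category.{v} A] (obj : ℕ → A)
    (α : ∀ n, obj n ⟶ obj (n + 1)) (hα : ∀ n, Epi (α n)) (n : ℕ) :
    Epi (bichainCompα obj α n) := by
  induction n with
  | zero => exact inferInstanceAs (Epi (𝟙 _))
  | succ n ih => exact @epi_comp _ _ _ _ _ _ ih _ (hα n)

lemma bichainCompβ_mono {A : Type u} [Category.{v} A] (obj : ℕ → A)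
    (β : ∀ n, obj (n + 1) ⟶ obj n) (hβ : ∀ n, Mono (β n)) (n : ℕ) :
    Mono (bichainCompβ obj β n) := by
  induction n with
  | zero => exact inferInstanceAs (Mono (𝟙 _))
  | succ n ih => exact @mono_comp _ _ _ _ _ _ (hβ n) _ ih

/-- An object of an abelian category satisfying both the ascending and the descending
chain condition on its subobjects (equivalently, an object of finite length) satisfies
the bi-chain condition. -/
theorem bichainCondition_of_finiteLength {A : Type u} [Category.{v} A] [Abelian A]
    (X : A) (hacc : WellFoundedGT (Subobject X)) (hdcc : WellFoundedLT (Subobject X)) :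
    BichainCondition X := by
  intro obj α β h hα hβ
  subst h
  have hα' := hα
  have hβ' := hβ
  set σ := bichainCompα obj α with hσ
  set γ := bichainCompβ obj β with hγ
  have hσe : ∀ n, Epi (σ n) := bichainCompα_epi obj α hα
  have hγm : ∀ n, Mono (γ n) := bichainCompβ_mono obj β hβ
  -- the ascending chain of kernels
  have Kmono : Monotone fun n => kernelSubobject (σ n) := by
    apply monotone_nat_of_le_succ
    intro n
    exact kernelSubobject_comp_le (σ n) (α n)
  obtain ⟨n₁, hn₁⟩ := (wellFoundedGT_iff_monotone_chain_condition.mp hacc)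
    ⟨fun n => kernelSubobject (σ n), Kmono⟩
  -- the descending chain of images
  let M : ℕ → Subobject (obj 0) := fun n => @Subobject.mk _ _ _ _ (γ n) (hγm n)
  have Manti : Monotone fun n => OrderDual.toDual (M n) := by
    apply monotone_nat_of_le_succ
    intro n
    apply OrderDual.toDual_le_toDual.mpr
    exact @Subobject.mk_le_mk_of_comm _ _ _ _ _ _ _ (hγm (n+1)) (hγm n) (β n) (by rfl)
  obtain ⟨n₂, hn₂⟩ := ((wellFoundedGT_iff_monotone_chain_condition
      (α := (Subobject (obj 0))ᵒᵈ)).mp hdcc) ⟨_, Manti⟩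
  refine ⟨max n₁ n₂, fun n hn => ?_⟩
  have hn1 : n₁ ≤ n := le_trans (le_max_left _ _) hn
  have hn2 : n₂ ≤ n := le_trans (le_max_right _ _) hn
  constructor
  · -- α n is an isomorphism
    have hker : kernelSubobject (σ n) = kernelSubobject (σ (n + 1)) :=
      (hn₁ n hn1).symm.trans (hn₁ (n + 1) (le_trans hn1 (Nat.le_succ n)))
    have : Epi (σ n) := hσe n
    have hmono : Mono (α n) := by
      apply Abelian.mono_of_kernel_ι_eq_zero
      -- pull back `kernel.ι (α n)` along the epi `σ n`
      let k := kernel.ι (α n)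
      haveI : Epi (σ n) := hσe n
      haveI hpb : Epi (pullback.snd (σ n) k) := Abelian.epi_pullback_of_epi_f _ _
      have hw : pullback.fst (σ n) k ≫ σ (n + 1) = 0 := by
        have hs : σ (n + 1) = σ n ≫ α n := rfl
        rw [hs, ← Category.assoc, pullback.condition, Category.assoc]
        simp [k]
      have hfac := kernelSubobject_factors (σ (n + 1)) (pullback.fst (σ n) k) hw
      rw [← hker] at hfac
      have h0 : pullback.fst (σ n) k ≫ σ n = 0 := by
        rw [← Subobject.factorThru_arrow _ _ hfac, Category.assoc,
          kernelSubobject_arrow_comp, comp_zero]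
      have h0' : pullback.snd (σ n) k ≫ k = 0 := by
        rw [← pullback.condition, h0]
      exact zero_of_epi_comp (pullback.snd (σ n) k) h0'
    exact isIso_of_mono_of_epi (α n)
  · -- β n is an isomorphism
    have himg : M (n + 1) = M n := by
      have e1 := hn₂ n hn2
      have e2 := hn₂ (n + 1) (le_trans hn2 (Nat.le_succ n))
      have := e1.symm.trans e2
      exact (OrderDual.toDual_inj.mp this).symm
    haveI := hγm n
    haveI := hγm (n + 1)
    have himg' : Subobject.mk (γ (n + 1)) = Subobject.mk (γ n) := himg
    let i := Subobject.isoOfMkEqMk (γ (n + 1)) (γ n) himg'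
    have hcomm : i.hom ≫ γ n = γ (n + 1) := Subobject.ofMkLEMk_comp himg'.le
    have : γ (n + 1) = β n ≫ γ n := rfl
    rw [this] at hcomm
    have : β n = i.hom := by
      haveI := hγm n
      exact ((cancel_mono (γ n)).mp hcomm.symm)
    rw [this]
    infer_instance
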